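/- An epimorphism e: X → Y in the category of supported sets is a regular epimorphism (a coequalizer) if and only if for every y ∈ Y, s_Y(y) equals the intersection of s_X(x) over all x with e(x) = y. -/

import Mathlib

open CategoryTheory

/-- A supported set over `A`: a set with a finite support for each element. -/
structure SuppSet (A : Type) : Type 1 where
  carrier : Type
  supp : carrier → Set A
  finite : ∀ x, (supp x).Finite

variable {A : Type}

instance : Category (SuppSet A) where
  Hom X Y := {f : X.carrier → Y.carrier // ∀ x, Y.supp (f x) ⊆ X.supp x}
  id _ := ⟨fun x => x, fun _ => subset_rfl⟩
  comp f g := ⟨fun x => g.1 (f.1 x), fun x => (g.2 _).trans (f.2 x)⟩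
  id_comp _ := Subtype.ext rfl
  comp_id _ := Subtype.ext rfl
  assoc _ _ _ := Subtype.ext rfl

/-- The forgetful functor from supported sets to sets. -/
def Forget (A : Type) : SuppSet A ⥤ Type where
  obj X := X.carrier
  map f := TypeCat.ofHom f.1
  map_id _ := rfl
  map_comp _ _ := rfl

lemma suppSet_epi_surjective {X Y : SuppSet A} (e : X ⟶ Y) (he : Epi e) :
    Function.Surjective e.1 := by
  let P : SuppSet A := ⟨Prop, fun _ => (∅ : Set A), fun _ => Set.finite_empty⟩
  let f1 : Y ⟶ P := ⟨fun y => ∃ x, e.1 x = y, fun _ => Set.empty_subset _⟩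
  let f2 : Y ⟶ P := ⟨fun _ => True, fun _ => Set.empty_subset _⟩
  have h : e ≫ f1 = e ≫ f2 := by
    apply Subtype.ext
    funext x
    exact eq_true ⟨x, rfl⟩
  have h2 : f1 = f2 := (cancel_epi e).1 h
  intro y
  have : (∃ x, e.1 x = y) = True := congrFun (congrArg Subtype.val h2) y
  exact this ▸ trivial

theorem suppSet_regularEpi_iff (A : Type) (X Y : SuppSet A) (e : X ⟶ Y) (he : Epi e) :
    Nonempty (RegularEpi e) ↔
    ∀ y : Y.carrier,
      Y.supp y = ⋂₀ {S : Set A | ∃ x : X.carrier, e.1 x = y ∧ S = X.supp x} := by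
  have hsurj := suppSet_epi_surjective e he
  constructor
  · rintro ⟨re⟩ y
    apply le_antisymm
    · -- always holds
      apply Set.subset_sInter
      rintro S ⟨x, hx, rfl⟩
      exact hx ▸ e.2 x
    · -- use regularity
      -- define Y' with the intersection supports
      have hfin : ∀ y : Y.carrier,
          (⋂₀ {S : Set A | ∃ x : X.carrier, e.1 x = y ∧ S = X.supp x}).Finite := by
        intro y
        obtain ⟨x, hx⟩ := hsurj y
        exact (X.finite x).subset (Set.sInter_subset_of_mem ⟨x, hx, rfl⟩)
      let Y' : SuppSet A := ⟨Y.carrier,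
        fun y => ⋂₀ {S : Set A | ∃ x : X.carrier, e.1 x = y ∧ S = X.supp x}, hfin⟩
      let e' : X ⟶ Y' := ⟨e.1, fun x => Set.sInter_subset_of_mem ⟨x, rfl, rfl⟩⟩
      have w' : re.left ≫ e' = re.right ≫ e' := by
        apply Subtype.ext
        funext p
        exact congrFun (congrArg Subtype.val re.w) p
      let h : Y ⟶ Y' := re.isColimit.desc (Limits.Cofork.ofπ e' w')
      have fac : e ≫ h = e' :=
        re.isColimit.fac (Limits.Cofork.ofπ e' w') Limits.WalkingParallelPair.one
      have hid : ∀ z : Y.carrier, h.1 z = z := by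
        intro z
        obtain ⟨x, hx⟩ := hsurj z
        have hfx : h.1 (e.1 x) = e.1 x := congrFun (congrArg Subtype.val fac) x
        rwa [hx] at hfx
      have := h.2 y
      rwa [hid y] at this
  · intro hsupp
    -- kernel pair
    let K : SuppSet A := ⟨{p : X.carrier × X.carrier // e.1 p.1 = e.1 p.2},
      fun p => X.supp p.1.1 ∪ X.supp p.1.2,
      fun p => (X.finite _).union (X.finite _)⟩
    let p1 : K ⟶ X := ⟨fun p => p.1.1, fun p => Set.subset_union_left⟩
    let p2 : K ⟶ X := ⟨fun p => p.1.2, fun p => Set.subset_union_right⟩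
    have w : p1 ≫ e = p2 ≫ e := by
      apply Subtype.ext; funext p; exact p.2
    -- constancy of coequalizing maps on fibers
    have const : ∀ {W : SuppSet A} (π : X ⟶ W), p1 ≫ π = p2 ≫ π →
        ∀ x x' : X.carrier, e.1 x = e.1 x' → π.1 x = π.1 x' := by
      intro W π hπ x x' hxx
      exact congrFun (congrArg Subtype.val hπ) ⟨(x, x'), hxx⟩
    refine ⟨⟨K, p1, p2, w, Limits.Cofork.IsColimit.mk _ (fun s => ⟨fun y => s.π.1 (hsurj y).choose, ?_⟩) ?_ ?_⟩⟩
    · intro y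
      show s.pt.supp (s.π.1 (hsurj y).choose) ⊆ Y.supp y
      rw [hsupp y]
      apply Set.subset_sInter
      rintro S ⟨x, hx, rfl⟩
      have hc : s.π.1 (hsurj y).choose = s.π.1 x :=
        const s.π s.condition _ _ (by rw [(hsurj y).choose_spec, hx])
      rw [hc]
      exact s.π.2 x
    · intro s
      apply Subtype.ext
      funext x
      exact const s.π s.condition _ _ (hsurj (e.1 x)).choose_spec
    · intro s m hm
      have : e ≫ m = s.π := hm
      apply (cancel_epi e).1
      rw [this]
      apply Subtype.ext
      funext x
      exact (const s.π s.condition _ _ (hsurj (e.1 x)).choose_spec).symm
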